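/- Let κ > 0 be real, N ≥ 1 an integer, and Q₁, …, Q_N : ℝ → ℝ twice continuously differentiable with Q_j(t) ≠ Q_k(t) for all j ≠ k and all t; let J₀ : ℝ → ℝ be continuously differentiable. Set v(t,x) = t − x², R_k(t) = Σ_{j≠k} 1/(Q_k(t) − Q_j(t)), A_k(t) = κ·Q_k'(t) + t − Q_k(t)² − 2·R_k(t), and on Ω = {(t,x) : x ≠ Q_k(t) for all k} define b₊(t,x) = −(1/κ)·Σ_{k=1}^N 1/(x − Q_k(t)) and 2·b₁(t,x) = (1/κ)·Σ_{k=1}^N A_k(t)/(x − Q_k(t)) − (2/κ)·Σ_{k=1}^N Q_k(t) − J₀(t) + (1/N − 1/κ)·Σ_{k=1}^N (x − Q_k(t)). Then, for any such Q_k and J₀, the first governing equation of quantum Painlevé II holds identically on Ω: ∂_t(κ·b₊ + v) + ∂_x(∂_x b₊ − b₊·(κ·b₊ + v) − 2·b₁) = 0. -/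

import Mathlib

open scoped BigOperators

/-- Partial derivative in the first ("time") variable. -/
noncomputable def pT (F : ℝ → ℝ → ℝ) : ℝ → ℝ → ℝ := fun t x => deriv (fun s => F s x) t

/-- Partial derivative in the second ("space") variable. -/
noncomputable def pX (F : ℝ → ℝ → ℝ) : ℝ → ℝ → ℝ := fun t x => deriv (fun y => F t y) x

lemma key_sum {N : ℕ} (q : Fin N → ℝ) (hq : ∀ j k : Fin N, j ≠ k → q j ≠ q k)
    (x : ℝ) (hx : ∀ k, x ≠ q k) :
    ∑ k, (∑ j ∈ Finset.univ.erase k, 1 / (q k - q j)) * ((x - q k)⁻¹) ^ 2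
      = (∑ k, (x - q k)⁻¹) * (∑ k, ((x - q k)⁻¹) ^ 2) - ∑ k, ((x - q k)⁻¹) ^ 3 := by
  have hc : ∀ k, x - q k ≠ 0 := fun k => sub_ne_zero.mpr (hx k)
  have hd : ∀ (k j : Fin N), j ∈ Finset.univ.erase k → q k - q j ≠ 0 := by
    intro k j hj
    rw [Finset.mem_erase] at hj
    exact sub_ne_zero.mpr (hq k j (Ne.symm hj.1))
  have hT : ∑ k, ∑ j ∈ Finset.univ.erase k, (q k - q j)⁻¹ * ((x - q k)⁻¹ * (x - q j)⁻¹) = 0 := by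
    have hswap : (∑ k, ∑ j ∈ Finset.univ.erase k, (q k - q j)⁻¹ * ((x - q k)⁻¹ * (x - q j)⁻¹))
        = ∑ j, ∑ k ∈ Finset.univ.erase j, (q k - q j)⁻¹ * ((x - q k)⁻¹ * (x - q j)⁻¹) := by
      refine Finset.sum_comm' ?_
      intro a b
      simp only [Finset.mem_univ, true_and, and_true, Finset.mem_erase]
      exact ne_comm
    have hneg : (∑ j, ∑ k ∈ Finset.univ.erase j, (q k - q j)⁻¹ * ((x - q k)⁻¹ * (x - q j)⁻¹))
        = -∑ k, ∑ j ∈ Finset.univ.erase k, (q k - q j)⁻¹ * ((x - q k)⁻¹ * (x - q j)⁻¹) := by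
      rw [← Finset.sum_neg_distrib]
      refine Finset.sum_congr rfl fun a _ => ?_
      rw [← Finset.sum_neg_distrib]
      refine Finset.sum_congr rfl fun b _ => ?_
      rw [show q b - q a = -(q a - q b) by ring, inv_neg]
      ring
    have := hswap.trans hneg
    linarith
  calc ∑ k, (∑ j ∈ Finset.univ.erase k, 1 / (q k - q j)) * ((x - q k)⁻¹) ^ 2
      = ∑ k, ∑ j ∈ Finset.univ.erase k,
          (((x - q k)⁻¹) ^ 2 * (x - q j)⁻¹ + (q k - q j)⁻¹ * ((x - q k)⁻¹ * (x - q j)⁻¹)) := by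
        refine Finset.sum_congr rfl fun k _ => ?_
        rw [Finset.sum_mul]
        refine Finset.sum_congr rfl fun j hj => ?_
        have h1 := hc k; have h2 := hc j; have h3 := hd k j hj
        field_simp
        ring
    _ = (∑ k, ∑ j ∈ Finset.univ.erase k, ((x - q k)⁻¹) ^ 2 * (x - q j)⁻¹)
        + ∑ k, ∑ j ∈ Finset.univ.erase k, (q k - q j)⁻¹ * ((x - q k)⁻¹ * (x - q j)⁻¹) := by
        rw [← Finset.sum_add_distrib]
        exact Finset.sum_congr rfl fun k _ => Finset.sum_add_distrib
    _ = ∑ k, ((x - q k)⁻¹) ^ 2 * ((∑ j, (x - q j)⁻¹) - (x - q k)⁻¹) := by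
        rw [hT, add_zero]
        refine Finset.sum_congr rfl fun k _ => ?_
        rw [← Finset.mul_sum, Finset.sum_erase_eq_sub (Finset.mem_univ k)]
    _ = (∑ k, (x - q k)⁻¹) * (∑ k, ((x - q k)⁻¹) ^ 2) - ∑ k, ((x - q k)⁻¹) ^ 3 := by
        have hpt : ∀ k ∈ Finset.univ, ((x - q k)⁻¹) ^ 2 * ((∑ j, (x - q j)⁻¹) - (x - q k)⁻¹)
            = ((x - q k)⁻¹) ^ 2 * (∑ j, (x - q j)⁻¹) - ((x - q k)⁻¹) ^ 3 :=
          fun k _ => by ring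
        rw [Finset.sum_congr rfl hpt, Finset.sum_sub_distrib, ← Finset.sum_mul]
        ring

/-- for quantum Painlevé II (`σ ≡ 1`, `v = t - x²`, `α ≡ 0`), the pole
ansatz `b₊ = -(1/κ) Σ_k 1/(x - Q_k)` together with the formula (3.12)/(3.14) for
`b₁` (with arbitrary `J₀`) satisfies the first governing equation (3.1) identically
away from the poles. -/
theorem qp2_first_governing_equation_ansatz
    (κ : ℝ) (hκ : 0 < κ) (N : ℕ) (hN : 1 ≤ N)
    (Q : Fin N → ℝ → ℝ)
    (hQ : ∀ k, ContDiff ℝ 2 (Q k))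
    (hQd : ∀ t, ∀ j k : Fin N, j ≠ k → Q j t ≠ Q k t)
    (J₀ : ℝ → ℝ) (hJ₀ : ContDiff ℝ 1 J₀)
    (v : ℝ → ℝ → ℝ) (hv : ∀ t x, v t x = t - x ^ 2)
    (R : Fin N → ℝ → ℝ)
    (hR : ∀ k t, R k t = ∑ j ∈ Finset.univ.erase k, 1 / (Q k t - Q j t))
    (A : Fin N → ℝ → ℝ)
    (hA : ∀ k t, A k t = κ * deriv (Q k) t + t - (Q k t) ^ 2 - 2 * R k t)
    (bp b₁ : ℝ → ℝ → ℝ)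
    (hbp : ∀ t x, bp t x = -(1 / κ) * ∑ k, 1 / (x - Q k t))
    (hb₁ : ∀ t x, 2 * b₁ t x = (1 / κ) * ∑ k, A k t / (x - Q k t)
        - (2 / κ) * ∑ k, Q k t - J₀ t
        + (1 / (N : ℝ) - 1 / κ) * ∑ k, (x - Q k t)) :
    ∀ t x, (∀ k, x ≠ Q k t) →
      pT (fun t x => κ * bp t x + v t x) t x
        + pX (fun t x => pX bp t x - bp t x * (κ * bp t x + v t x)
            - 2 * b₁ t x) t x = 0 := by
  intro t x hx
  have hκ0 : κ ≠ 0 := ne_of_gt hκ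
  have hN0 : (N : ℝ) ≠ 0 := Nat.cast_ne_zero.mpr (by omega)
  have hc : ∀ k, x - Q k t ≠ 0 := fun k => sub_ne_zero.mpr (hx k)
  have hQ' : ∀ k, HasDerivAt (Q k) (deriv (Q k) t) t := fun k =>
    (((hQ k).differentiable (by norm_num)) t).hasDerivAt
  -- formula for pX bp off the poles
  have hbpX : ∀ y : ℝ, (∀ k, y ≠ Q k t) →
      deriv (fun z => bp t z) y = κ⁻¹ * ∑ k, ((y - Q k t) ^ 2)⁻¹ := by
    intro y hy
    have hfun : (fun z => bp t z) = fun z => -κ⁻¹ * ∑ k, (z - Q k t)⁻¹ := by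
      funext z; rw [hbp]; simp [one_div]
    rw [hfun]
    have hd : HasDerivAt (fun z => -κ⁻¹ * ∑ k, (z - Q k t)⁻¹)
        (-κ⁻¹ * ∑ k, (-1 / (y - Q k t) ^ 2)) y := by
      refine HasDerivAt.const_mul _ (HasDerivAt.fun_sum fun k _ => ?_)
      exact ((hasDerivAt_id y).sub_const _).inv (sub_ne_zero.mpr (hy k))
    rw [hd.deriv]
    rw [show (∑ k, (-1 / (y - Q k t) ^ 2)) = -∑ k, ((y - Q k t) ^ 2)⁻¹ by
      rw [← Finset.sum_neg_distrib]
      exact Finset.sum_congr rfl fun k _ => by rw [neg_div, one_div]]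
    ring
  suffices h : deriv (fun s => κ * bp s x + v s x) t
      + deriv (fun y => deriv (fun z => bp t z) y - bp t y * (κ * bp t y + v t y)
          - 2 * b₁ t y) x = 0 by
    simpa [pT, pX] using h
  -- time derivative
  have hFt : (fun s => κ * bp s x + v s x)
      = fun s => κ * (-κ⁻¹ * ∑ k, (x - Q k s)⁻¹) + (s - x ^ 2) := by
    funext s; rw [hbp, hv]; simp [one_div]
  have hinvT : ∀ k : Fin N, HasDerivAt (fun s => (x - Q k s)⁻¹)
      (deriv (Q k) t * ((x - Q k t)⁻¹) ^ 2) t := by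
    intro k
    have h := ((hasDerivAt_const t x).sub (hQ' k)).inv (hc k)
    have he : deriv (Q k) t * ((x - Q k t)⁻¹) ^ 2 = -(0 - deriv (Q k) t) / (x - Q k t) ^ 2 := by
      have := hc k; field_simp; ring
    rw [he]; exact h
  have hDt : HasDerivAt (fun s => κ * (-κ⁻¹ * ∑ k, (x - Q k s)⁻¹) + (s - x ^ 2))
      (κ * (-κ⁻¹ * ∑ k, deriv (Q k) t * ((x - Q k t)⁻¹) ^ 2) + 1) t :=
    (HasDerivAt.const_mul κ (HasDerivAt.const_mul (-κ⁻¹)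
      (HasDerivAt.fun_sum fun k _ => hinvT k))).fun_add ((hasDerivAt_id t).sub_const _)
  rw [hFt, hDt.deriv]
  -- eventually-equal explicit form of the space function
  have hev : (fun y => deriv (fun z => bp t z) y - bp t y * (κ * bp t y + v t y)
          - 2 * b₁ t y)
      =ᶠ[nhds x] (fun y => κ⁻¹ * ∑ k, ((y - Q k t) ^ 2)⁻¹
        - (-κ⁻¹ * ∑ k, (y - Q k t)⁻¹) * (κ * (-κ⁻¹ * ∑ k, (y - Q k t)⁻¹) + (t - y ^ 2))
        - (κ⁻¹ * ∑ k, A k t * (y - Q k t)⁻¹ - 2 * κ⁻¹ * ∑ k, Q k t - J₀ t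
            + ((N : ℝ)⁻¹ - κ⁻¹) * ∑ k, (y - Q k t))) := by
    have hUn : ∀ᶠ y in nhds x, ∀ k, y ≠ Q k t := by
      rw [Filter.eventually_all]
      exact fun k => isOpen_ne.eventually_mem (hx k)
    filter_upwards [hUn] with y hy
    rw [hbpX y hy]
    rw [hbp, hv, hb₁]
    simp only [one_div, div_eq_mul_inv, one_mul]
  rw [hev.deriv_eq]
  -- building blocks for the space derivative
  have hinv1 : ∀ k : Fin N, HasDerivAt (fun y => (y - Q k t)⁻¹)
      (-(((x - Q k t)⁻¹) ^ 2)) x := by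
    intro k
    have h := ((hasDerivAt_id x).sub_const (Q k t)).inv (hc k)
    have he : -(((x - Q k t)⁻¹) ^ 2) = -1 / (x - Q k t) ^ 2 := by
      have := hc k; field_simp
    rw [he]; exact h
  have hinv2 : ∀ k : Fin N, HasDerivAt (fun y => ((y - Q k t) ^ 2)⁻¹)
      (-2 * ((x - Q k t)⁻¹) ^ 3) x := by
    intro k
    have h := (((hasDerivAt_id x).sub_const (Q k t)).pow 2).inv
      (pow_ne_zero 2 (hc k))
    have he : -2 * ((x - Q k t)⁻¹) ^ 3
        = -((2 : ℕ) * (x - Q k t) ^ (2 - 1) * 1) / ((x - Q k t) ^ 2) ^ 2 := by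
      have := hc k; field_simp; ring
    rw [he]; exact h
  have hS1 : HasDerivAt (fun y => ∑ k, (y - Q k t)⁻¹)
      (-∑ k, ((x - Q k t)⁻¹) ^ 2) x := by
    have h := HasDerivAt.fun_sum (fun k (_ : k ∈ Finset.univ) => hinv1 k)
    rw [show (-∑ k, ((x - Q k t)⁻¹) ^ 2) = ∑ k, -(((x - Q k t)⁻¹) ^ 2) by
      rw [Finset.sum_neg_distrib]]
    exact h
  have hS2 : HasDerivAt (fun y => ∑ k, ((y - Q k t) ^ 2)⁻¹)
      (-2 * ∑ k, ((x - Q k t)⁻¹) ^ 3) x := by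
    have h := HasDerivAt.fun_sum (fun k (_ : k ∈ Finset.univ) => hinv2 k)
    rw [show (-2 * ∑ k, ((x - Q k t)⁻¹) ^ 3) = ∑ k, -2 * ((x - Q k t)⁻¹) ^ 3 by
      rw [Finset.mul_sum]]
    exact h
  have hSA : HasDerivAt (fun y => ∑ k, A k t * (y - Q k t)⁻¹)
      (-∑ k, A k t * ((x - Q k t)⁻¹) ^ 2) x := by
    have h := HasDerivAt.fun_sum (fun k (_ : k ∈ Finset.univ) =>
      HasDerivAt.const_mul (A k t) (hinv1 k))
    rw [show (-∑ k, A k t * ((x - Q k t)⁻¹) ^ 2)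
        = ∑ k, A k t * -(((x - Q k t)⁻¹) ^ 2) by
      rw [← Finset.sum_neg_distrib]
      exact Finset.sum_congr rfl fun k _ => by ring]
    exact h
  have hSlin : HasDerivAt (fun y => ∑ k : Fin N, (y - Q k t)) ((N : ℝ)) x := by
    have h := HasDerivAt.fun_sum (fun k (_ : k ∈ Finset.univ) =>
      (hasDerivAt_id x).sub_const (Q k t))
    simpa using h
  have hP : HasDerivAt (fun y => t - y ^ 2) (-(2 * x)) x := by
    have h := (hasDerivAt_const x t).fun_sub (hasDerivAt_pow 2 x)
    simpa using h
  have hbpE : HasDerivAt (fun y => -κ⁻¹ * ∑ k, (y - Q k t)⁻¹)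
      (-κ⁻¹ * -∑ k, ((x - Q k t)⁻¹) ^ 2) x := HasDerivAt.const_mul _ hS1
  have hfac : HasDerivAt (fun y => κ * (-κ⁻¹ * ∑ k, (y - Q k t)⁻¹) + (t - y ^ 2))
      (κ * (-κ⁻¹ * -∑ k, ((x - Q k t)⁻¹) ^ 2) + -(2 * x)) x :=
    (HasDerivAt.const_mul κ hbpE).add hP
  have hH : HasDerivAt (fun y => κ⁻¹ * ∑ k, ((y - Q k t) ^ 2)⁻¹
        - (-κ⁻¹ * ∑ k, (y - Q k t)⁻¹) * (κ * (-κ⁻¹ * ∑ k, (y - Q k t)⁻¹) + (t - y ^ 2))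
        - (κ⁻¹ * ∑ k, A k t * (y - Q k t)⁻¹ - 2 * κ⁻¹ * ∑ k, Q k t - J₀ t
            + ((N : ℝ)⁻¹ - κ⁻¹) * ∑ k, (y - Q k t)))
      (κ⁻¹ * (-2 * ∑ k, ((x - Q k t)⁻¹) ^ 3)
        - ((-κ⁻¹ * -∑ k, ((x - Q k t)⁻¹) ^ 2)
              * (κ * (-κ⁻¹ * ∑ k, (x - Q k t)⁻¹) + (t - x ^ 2))
            + (-κ⁻¹ * ∑ k, (x - Q k t)⁻¹)
              * (κ * (-κ⁻¹ * -∑ k, ((x - Q k t)⁻¹) ^ 2) + -(2 * x)))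
        - (κ⁻¹ * -∑ k, A k t * ((x - Q k t)⁻¹) ^ 2 + ((N : ℝ)⁻¹ - κ⁻¹) * (N : ℝ))) x := by
    exact ((HasDerivAt.const_mul κ⁻¹ hS2).sub (hbpE.mul hfac)).sub
      ((((HasDerivAt.const_mul κ⁻¹ hSA).sub_const _).sub_const _).add
        (HasDerivAt.const_mul _ hSlin))
  rw [hH.deriv]
  -- the algebraic identity for the A-sum
  have hkey := key_sum (fun k => Q k t) (fun j k h => hQd t j k h) x hx
  have hRsum : ∑ k, R k t * ((x - Q k t)⁻¹) ^ 2
      = (∑ k, (x - Q k t)⁻¹) * (∑ k, ((x - Q k t)⁻¹) ^ 2)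
        - ∑ k, ((x - Q k t)⁻¹) ^ 3 := by
    refine Eq.trans (Finset.sum_congr rfl fun k _ => by rw [hR]) hkey
  have hSAval : ∑ k, A k t * ((x - Q k t)⁻¹) ^ 2
      = κ * (∑ k, deriv (Q k) t * ((x - Q k t)⁻¹) ^ 2)
        + ((t - x ^ 2) * (∑ k, ((x - Q k t)⁻¹) ^ 2)
            + 2 * x * (∑ k, (x - Q k t)⁻¹) - (N : ℝ))
        - 2 * ((∑ k, (x - Q k t)⁻¹) * (∑ k, ((x - Q k t)⁻¹) ^ 2)
            - ∑ k, ((x - Q k t)⁻¹) ^ 3) := by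
    rw [← hRsum]
    have hpt : ∀ k ∈ Finset.univ, A k t * ((x - Q k t)⁻¹) ^ 2
        = κ * (deriv (Q k) t * ((x - Q k t)⁻¹) ^ 2)
          + ((t - x ^ 2) * ((x - Q k t)⁻¹) ^ 2 + 2 * x * (x - Q k t)⁻¹ - 1)
          - 2 * (R k t * ((x - Q k t)⁻¹) ^ 2) := by
      intro k _
      rw [hA]
      have := hc k
      field_simp
      ring
    rw [Finset.sum_congr rfl hpt]
    rw [Finset.sum_sub_distrib, Finset.sum_add_distrib, Finset.sum_sub_distrib,
      Finset.sum_add_distrib, ← Finset.mul_sum, ← Finset.mul_sum, ← Finset.mul_sum,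
      ← Finset.mul_sum]
    simp
  rw [hSAval]
  field_simp
  ring
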